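/- Let d ∈ {3, 4, 5}, fix p_S ∈ [0, 1/2], let S := H(p_S) where H(p) := −p·log₂ p − (1 − p)·log₂(1 − p), and set x := √(1 − (1 − 2p_S)²). Define ω : Fin d × Fin d → ℝ by ω_{00} = ω_{(d−1)(d−1)} = (1 + x)/4, ω_{0(d−1)} = ω_{(d−1)0} = (1 − x)/4, and ω_{ln} = 0 otherwise. Then ω is a valid probability weight (nonnegative entries summing to 1), its entanglement entropy satisfies S_d(ω) = S, and Q(ω) = 8(1 + x). (This is the optimal two-qudit probe |ψ^o_{2,d}(S)⟩ at fixed entanglement entropy S.) -/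

import Mathlib

open Matrix

/-- Rescaled, equally spaced eigenvalues `η̄_j = (2j − (d−1))/(d−1) ∈ [−1, 1]` of the local
rescaled spin-z operator `Z̄_d`. -/
noncomputable def etabar (d : ℕ) (j : Fin d) : ℝ :=
  (2 * (j : ℝ) - ((d : ℝ) - 1)) / ((d : ℝ) - 1)

/-- Quantum Fisher information of the two-qudit probe `|ψ⟩ = Σ_{l,n} √ω_{ln} |l n⟩` under
the generator `h = Z̄_d⊗I + I⊗Z̄_d`:
`Q(ω) = 4[Σ ω_{ln}(η̄_l + η̄_n)² − (Σ ω_{ln}(η̄_l + η̄_n))²]`. -/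
noncomputable def QFId (d : ℕ) (ω : Fin d × Fin d → ℝ) : ℝ :=
  4 * ((∑ l, ∑ n, ω (l, n) * (etabar d l + etabar d n) ^ 2) -
    (∑ l, ∑ n, ω (l, n) * (etabar d l + etabar d n)) ^ 2)

/-- The matrix of coefficients `A_{ln} = √ω_{ln}` of the probe. -/
noncomputable def Amat (d : ℕ) (ω : Fin d × Fin d → ℝ) : Matrix (Fin d) (Fin d) ℝ :=
  Matrix.of fun l n => Real.sqrt (ω (l, n))

/-- The Gram matrix `AᵀA` is real symmetric (Hermitian). -/
theorem gram_isHermitian (d : ℕ) (ω : Fin d × Fin d → ℝ) :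
    ((Amat d ω)ᵀ * Amat d ω).IsHermitian := by
  rw [← Matrix.conjTranspose_eq_transpose_of_trivial]
  exact Matrix.isHermitian_conjTranspose_mul_self _

/-- The eigenvalues of `AᵀA` (the squared Schmidt coefficients of the probe). -/
noncomputable def gramEig (d : ℕ) (ω : Fin d × Fin d → ℝ) : Fin d → ℝ :=
  (gram_isHermitian d ω).eigenvalues

/-- Generalized geometric measure `g_d(ω) = 1 − λ_max(AᵀA)`. -/
noncomputable def GGMd (d : ℕ) (ω : Fin d × Fin d → ℝ) : ℝ :=
  1 - ⨆ i, gramEig d ω i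

/-- Von Neumann entanglement entropy `S_d(ω) = −Σ_i λ_i log₂ λ_i`, where the `λ_i` are the
eigenvalues of `AᵀA` (with `0 log₂ 0 = 0`, automatic since `Real.logb 2 0 = 0`). -/
noncomputable def entEntropyd (d : ℕ) (ω : Fin d × Fin d → ℝ) : ℝ :=
  -∑ i, gramEig d ω i * Real.logb 2 (gramEig d ω i)

/-- Binary entropy `H(p) = −p log₂ p − (1−p) log₂ (1−p)`. -/
noncomputable def binEnt (p : ℝ) : ℝ :=
  -(p * Real.logb 2 p) - (1 - p) * Real.logb 2 (1 - p)

open Polynomial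

lemma charpoly_conj'' {n R : Type*} [Fintype n] [DecidableEq n] [CommRing R]
    (U V D : Matrix n n R) (hUV : U * V = 1) (hVU : V * U = 1) :
    (U * D * V).charpoly = D.charpoly := by
  have hm1 : (U.map C) * (V.map C) = 1 := by
    rw [← Matrix.map_mul, hUV, Matrix.map_one C C.map_zero C.map_one]
  have hm2 : (V.map C) * (U.map C) = 1 := by
    rw [← Matrix.map_mul, hVU, Matrix.map_one C C.map_zero C.map_one]
  have hc : charmatrix (U * D * V) = (U.map C) * charmatrix D * (V.map C) := by
    rw [charmatrix, charmatrix, mul_sub, sub_mul]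
    congr 1
    · have : (U.map C) * Matrix.scalar n (X : R[X]) = Matrix.scalar n (X : R[X]) * (U.map C) :=
        (Matrix.scalar_commute X (fun r => Commute.all _ _) _).symm
      rw [this, mul_assoc, hm1, mul_one]
    · simp only [RingHom.mapMatrix_apply, Matrix.map_mul]
  unfold Matrix.charpoly
  rw [hc, det_mul, det_mul, mul_comm, ← mul_assoc, ← det_mul, hm2, det_one, one_mul]

lemma charpoly_hermitian' {d : ℕ} (M : Matrix (Fin d) (Fin d) ℝ) (hM : M.IsHermitian) :
    M.charpoly = ∏ i, (X - C (hM.eigenvalues i)) := by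
  have h1 : (hM.eigenvectorUnitary : Matrix (Fin d) (Fin d) ℝ) *
      star (hM.eigenvectorUnitary : Matrix (Fin d) (Fin d) ℝ) = 1 :=
    Matrix.mem_unitaryGroup_iff.mp hM.eigenvectorUnitary.2
  have h2 : star (hM.eigenvectorUnitary : Matrix (Fin d) (Fin d) ℝ) *
      (hM.eigenvectorUnitary : Matrix (Fin d) (Fin d) ℝ) = 1 :=
    Matrix.mem_unitaryGroup_iff'.mp hM.eigenvectorUnitary.2
  have key : M.charpoly =
      (Matrix.diagonal (RCLike.ofReal ∘ hM.eigenvalues) : Matrix (Fin d) (Fin d) ℝ).charpoly := by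
    conv_lhs => rw [hM.spectral_theorem]
    exact charpoly_conj'' _ _ _ h1 h2
  rw [key, Matrix.charpoly_of_upperTriangular _ (Matrix.blockTriangular_diagonal _)]
  simp [Matrix.diagonal_apply_eq]

lemma sum_comp_of_prod_eq' {d : ℕ} (f g : Fin d → ℝ)
    (h : ∏ i, (X - C (f i)) = ∏ i, (X - C (g i))) (F : ℝ → ℝ) :
    ∑ i, F (f i) = ∑ i, F (g i) := by
  have hm : (Finset.univ.val.map f) = (Finset.univ.val.map g) := by
    have h1 : ((Finset.univ.val.map f).map fun a => X - C a).prod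
        = ((Finset.univ.val.map g).map fun a => X - C a).prod := by
      simpa [Finset.prod_eq_multiset_prod, Multiset.map_map, Function.comp_def] using h
    have := congrArg Polynomial.roots h1
    rwa [Polynomial.roots_multiset_prod_X_sub_C, Polynomial.roots_multiset_prod_X_sub_C] at this
  calc ∑ i, F (f i) = ((Finset.univ.val.map f).map F).sum := by
        rw [Multiset.map_map]; rfl
    _ = ((Finset.univ.val.map g).map F).sum := by rw [hm]
    _ = ∑ i, F (g i) := by rw [Multiset.map_map]; rfl


set_option maxHeartbeats 2000000 in
/-- For `d ∈ {3, 4, 5}`, `p_S ∈ [0, 1/2]`, `S = H(p_S)` and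
`x = √(1 − (1 − 2p_S)²)`, the weight `ω` with `ω_{00} = ω_{(d−1)(d−1)} = (1+x)/4`,
`ω_{0(d−1)} = ω_{(d−1)0} = (1−x)/4`, and all other entries `0` is a valid probability
weight with entanglement entropy `S_d(ω) = S` and `Q(ω) = 8(1 + x)`. (The optimal two-qudit
probe at fixed entanglement entropy `S`.) -/
theorem optimal_probe_fixed_entropy_two_qudits (d : ℕ) (hd : d = 3 ∨ d = 4 ∨ d = 5)
    (pS S x : ℝ) (hpS : pS ∈ Set.Icc (0 : ℝ) (1 / 2)) (hS : S = binEnt pS)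
    (hx : x = Real.sqrt (1 - (1 - 2 * pS) ^ 2)) (ω : Fin d × Fin d → ℝ)
    (hω : ∀ l n : Fin d, ω (l, n) =
      if ((l : ℕ) = 0 ∧ (n : ℕ) = 0) ∨ ((l : ℕ) = d - 1 ∧ (n : ℕ) = d - 1) then (1 + x) / 4
      else if ((l : ℕ) = 0 ∧ (n : ℕ) = d - 1) ∨ ((l : ℕ) = d - 1 ∧ (n : ℕ) = 0) then
        (1 - x) / 4
      else 0) :
    (∀ p, 0 ≤ ω p) ∧ (∑ p, ω p) = 1 ∧ entEntropyd d ω = S ∧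
      QFId d ω = 8 * (1 + x) := by
  obtain ⟨hp0, hp2⟩ := hpS
  have hxsq : x ^ 2 = 1 - (1 - 2 * pS) ^ 2 := by
    rw [hx]; exact Real.sq_sqrt (by nlinarith)
  have hx0 : 0 ≤ x := hx ▸ Real.sqrt_nonneg _
  have hx1 : x ≤ 1 := by nlinarith
  have hs4 : Real.sqrt 4 = 2 := by
    rw [show (4:ℝ) = 2^2 by norm_num, Real.sqrt_sq]; norm_num
  have ha2sq : Real.sqrt (1+x) ^ 2 = 1 + x := Real.sq_sqrt (by linarith)
  have hb2sq : Real.sqrt (1-x) ^ 2 = 1 - x := Real.sq_sqrt (by linarith)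
  have hab' : Real.sqrt (1+x) * Real.sqrt (1-x) = 1 - 2*pS := by
    rw [← Real.sqrt_mul (by linarith)]
    rw [show (1+x) * (1-x) = (1-2*pS)^2 by nlinarith]
    exact Real.sqrt_sq (by linarith)
  have h2y : (2:ℝ[X]) * Polynomial.C (1/2 : ℝ) = 1 := by
    rw [show (2:ℝ[X]) = Polynomial.C 2 from (map_ofNat Polynomial.C 2).symm, ← Polynomial.C_mul]
    norm_num
  have h' : (Polynomial.C (2⁻¹:ℝ) : ℝ[X]) = Polynomial.C (1/2:ℝ) := by norm_num
  have hnn : ∀ p : Fin d × Fin d, 0 ≤ ω p := by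
    rintro ⟨l, n⟩
    rw [hω]
    split_ifs <;> nlinarith
  rcases hd with rfl | rfl | rfl
  · refine ⟨hnn, ?_, ?_, ?_⟩
    · norm_num [Fintype.sum_prod_type, Fin.sum_univ_succ, hω]
      ring
    · have hgram : (Amat 3 ω)ᵀ * Amat 3 ω =
          !![1/2, 0, 1/2 - pS; 0, 0, 0; 1/2 - pS, 0, 1/2] := by
        ext i j
        fin_cases i <;> fin_cases j <;>
          · simp only [Amat, Matrix.mul_apply, Matrix.transpose_apply, Matrix.of_apply,
              Fin.sum_univ_three]
            norm_num [hω]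
            try rw [hs4]
            try first
              | linear_combination (ha2sq + hb2sq)/4
              | linear_combination hab'/2
      have hcp : ∏ i, (Polynomial.X - Polynomial.C (gramEig 3 ω i)) =
          ∏ i, (Polynomial.X - Polynomial.C (![pS, 1 - pS, 0] i)) := by
        rw [show gramEig 3 ω = (gram_isHermitian 3 ω).eigenvalues from rfl,
          ← charpoly_hermitian' _ (gram_isHermitian 3 ω), hgram]
        have hch : charmatrix (!![1/2, 0, 1/2 - pS; 0, 0, 0; 1/2 - pS, 0, 1/2] :
            Matrix (Fin 3) (Fin 3) ℝ) =
            !![X - Polynomial.C (1/2:ℝ), 0, -Polynomial.C (1/2 - pS); 0, X, 0; -Polynomial.C (1/2 - pS), 0, X - Polynomial.C (1/2:ℝ)] := by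
          ext i j
          fin_cases i <;> fin_cases j <;>
            simp [charmatrix_apply, Matrix.diagonal_apply, Matrix.vecHead, Matrix.vecTail]
        rw [Matrix.charpoly, hch, Matrix.det_fin_three, Fin.prod_univ_three]
        simp [Matrix.vecHead, Matrix.vecTail, Polynomial.C_sub, Polynomial.C_0, Polynomial.C_1]
        linear_combination (-(X * (X - Polynomial.C pS))) * h2y + (2*X*(Polynomial.C pS - X)) * h'
      have hsum := sum_comp_of_prod_eq' _ _ hcp (fun t => t * Real.logb 2 t)
      rw [entEntropyd, hsum, Fin.sum_univ_three, hS, binEnt]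
      norm_num
      simp [Matrix.cons_val]
      try ring
    · rw [QFId]
      norm_num [etabar, Fin.sum_univ_succ, hω]
      ring
  · refine ⟨hnn, ?_, ?_, ?_⟩
    · norm_num [Fintype.sum_prod_type, Fin.sum_univ_succ, hω]
      ring
    · have hgram : (Amat 4 ω)ᵀ * Amat 4 ω =
          !![1/2, 0, 0, 1/2 - pS; 0, 0, 0, 0; 0, 0, 0, 0; 1/2 - pS, 0, 0, 1/2] := by
        ext i j
        fin_cases i <;> fin_cases j <;>
          · simp only [Amat, Matrix.mul_apply, Matrix.transpose_apply, Matrix.of_apply,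
              Fin.sum_univ_four]
            norm_num [hω, show ((3:Fin 4):ℕ) = 3 by decide]
            try rw [hs4]
            try first
              | linear_combination (ha2sq + hb2sq)/4
              | linear_combination hab'/2
      have hcp : ∏ i, (Polynomial.X - Polynomial.C (gramEig 4 ω i)) =
          ∏ i, (Polynomial.X - Polynomial.C (![pS, 1 - pS, 0, 0] i)) := by
        rw [show gramEig 4 ω = (gram_isHermitian 4 ω).eigenvalues from rfl,
          ← charpoly_hermitian' _ (gram_isHermitian 4 ω), hgram]
        have hch : charmatrix (!![1/2, 0, 0, 1/2 - pS; 0, 0, 0, 0; 0, 0, 0, 0; 1/2 - pS, 0, 0, 1/2] :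
            Matrix (Fin 4) (Fin 4) ℝ) =
            !![X - Polynomial.C (1/2:ℝ), 0, 0, -Polynomial.C (1/2 - pS); 0, X, 0, 0; 0, 0, X, 0; -Polynomial.C (1/2 - pS), 0, 0, X - Polynomial.C (1/2:ℝ)] := by
          ext i j
          fin_cases i <;> fin_cases j <;>
            simp [charmatrix_apply, Matrix.diagonal_apply, Matrix.vecHead, Matrix.vecTail]
        rw [Matrix.charpoly, hch, Fin.prod_univ_four]
        simp [Matrix.det_succ_row_zero, Fin.sum_univ_succ, Matrix.vecHead, Matrix.vecTail,
          Polynomial.C_sub, Polynomial.C_0, Polynomial.C_1,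
          show Fin.succAbove (3:Fin 4) 2 = 2 by decide]
        linear_combination (-(X^2 * (X - Polynomial.C pS))) * h2y + (2*X^2*(Polynomial.C pS - X)) * h'
      have hsum := sum_comp_of_prod_eq' _ _ hcp (fun t => t * Real.logb 2 t)
      rw [entEntropyd, hsum, Fin.sum_univ_four, hS, binEnt]
      norm_num
      simp [Matrix.cons_val]
      try ring
    · rw [QFId]
      norm_num [etabar, Fin.sum_univ_succ, hω]
      ring
  · refine ⟨hnn, ?_, ?_, ?_⟩
    · norm_num [Fintype.sum_prod_type, Fin.sum_univ_succ, hω]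
      ring
    · have hgram : (Amat 5 ω)ᵀ * Amat 5 ω =
          !![1/2, 0, 0, 0, 1/2 - pS; 0, 0, 0, 0, 0; 0, 0, 0, 0, 0; 0, 0, 0, 0, 0; 1/2 - pS, 0, 0, 0, 1/2] := by
        ext i j
        fin_cases i <;> fin_cases j <;>
          · simp only [Amat, Matrix.mul_apply, Matrix.transpose_apply, Matrix.of_apply,
              Fin.sum_univ_five]
            norm_num [hω, show ((3:Fin 5):ℕ) = 3 by decide, show ((4:Fin 5):ℕ) = 4 by decide]
            try rw [hs4]
            try first
              | linear_combination (ha2sq + hb2sq)/4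
              | linear_combination hab'/2
      have hcp : ∏ i, (Polynomial.X - Polynomial.C (gramEig 5 ω i)) =
          ∏ i, (Polynomial.X - Polynomial.C (![pS, 1 - pS, 0, 0, 0] i)) := by
        rw [show gramEig 5 ω = (gram_isHermitian 5 ω).eigenvalues from rfl,
          ← charpoly_hermitian' _ (gram_isHermitian 5 ω), hgram]
        have hch : charmatrix (!![1/2, 0, 0, 0, 1/2 - pS; 0, 0, 0, 0, 0; 0, 0, 0, 0, 0; 0, 0, 0, 0, 0; 1/2 - pS, 0, 0, 0, 1/2] :
            Matrix (Fin 5) (Fin 5) ℝ) =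
            !![X - Polynomial.C (1/2:ℝ), 0, 0, 0, -Polynomial.C (1/2 - pS); 0, X, 0, 0, 0; 0, 0, X, 0, 0; 0, 0, 0, X, 0; -Polynomial.C (1/2 - pS), 0, 0, 0, X - Polynomial.C (1/2:ℝ)] := by
          ext i j
          fin_cases i <;> fin_cases j <;>
            simp [charmatrix_apply, Matrix.diagonal_apply, Matrix.vecHead, Matrix.vecTail]
        rw [Matrix.charpoly, hch, Fin.prod_univ_five]
        simp [Matrix.det_succ_row_zero, Fin.sum_univ_succ, Matrix.vecHead, Matrix.vecTail,
          Polynomial.C_sub, Polynomial.C_0, Polynomial.C_1,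
          show Fin.succAbove (4:Fin 5) 2 = 2 by decide, show Fin.succAbove (1:Fin 4) 2 = 3 by decide,
          show Fin.succAbove (4:Fin 5) (3:Fin 4) = 3 by decide]
        have hidx : (⟨((3:Fin 4):ℕ), by omega⟩ : Fin 5) = 3 := by decide
        linear_combination (-(X^3 * (X - Polynomial.C pS))) * h2y + (2*X^3*(Polynomial.C pS - X)) * h'
      have hsum := sum_comp_of_prod_eq' _ _ hcp (fun t => t * Real.logb 2 t)
      rw [entEntropyd, hsum, Fin.sum_univ_five, hS, binEnt]
      norm_num
      simp [Matrix.cons_val]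
      try ring
    · rw [QFId]
      norm_num [etabar, Fin.sum_univ_succ, hω]
      ring
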